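/- For every real A > 0 and every natural number N, define a_N = (1/4) * S1, a'_N = (1/2) * S1, b_N = (1/16) * (T1 + T2 + 2*(T3 + T4)) and b'_N = (1/8) * (T1 + 2*(T2 + T3 + T4)), where S1 = sum_{p ≤ N} 1/(A+p)^2, T1 = sum_{p,q ≤ N} 1/((A+p)^2 (A+q)^2), T2 = sum_{p,q ≤ N} 1/((A+p)^2 (A+q)(A+p+q)), T3 = sum_{p,q ≤ N} 1/((A+p)^3 (A+q)), T4 = sum_{p,q ≤ N} 1/((A+p)^3 (A+p+q)). Then a'_N = 2 a_N and b'_N - 2 b_N - a_N^2 = (A/16) * sum_{p,q ≤ N} 1/((A+p)^2 (A+q)^2 (A+p+q)). -/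

import Mathlib

theorem stmt_15 (A : ℝ) (hA : 0 < A) (N : ℕ) :
    let S1 := ∑ p ∈ Finset.range (N + 1), 1 / (A + p)^2
    let T1 := ∑ p ∈ Finset.range (N + 1), ∑ q ∈ Finset.range (N + 1),
      1 / ((A + p)^2 * (A + q)^2)
    let T2 := ∑ p ∈ Finset.range (N + 1), ∑ q ∈ Finset.range (N + 1),
      1 / ((A + p)^2 * (A + q) * (A + p + q))
    let T3 := ∑ p ∈ Finset.range (N + 1), ∑ q ∈ Finset.range (N + 1),
      1 / ((A + p)^3 * (A + q))
    let T4 := ∑ p ∈ Finset.range (N + 1), ∑ q ∈ Finset.range (N + 1),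
      1 / ((A + p)^3 * (A + p + q))
    let a := (1 / 4) * S1
    let a' := (1 / 2) * S1
    let b := (1 / 16) * (T1 + T2 + 2 * (T3 + T4))
    let b' := (1 / 8) * (T1 + 2 * (T2 + T3 + T4))
    a' = 2 * a ∧
    b' - 2 * b - a^2 = (A / 16) * ∑ p ∈ Finset.range (N + 1), ∑ q ∈ Finset.range (N + 1),
      1 / ((A + p)^2 * (A + q)^2 * (A + p + q)) := by
  intro S1 T1 T2 T3 T4 a a' b b'
  have hpos : ∀ n : ℕ, (0 : ℝ) < A + n := fun n => by positivity
  constructor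
  · show (1 / 2) * S1 = 2 * ((1 / 4) * S1); ring
  · -- T1 = S1 ^ 2
    have hT1 : T1 = S1 ^ 2 := by
      rw [sq, Finset.sum_mul_sum]
      exact Finset.sum_congr rfl fun p _ => Finset.sum_congr rfl fun q _ => by
        rw [div_mul_div_comm, one_mul]
    -- key identity: 2 * T2 - T1 = A * S where S is the RHS sum
    have key : 2 * T2 - T1 = A * ∑ p ∈ Finset.range (N + 1), ∑ q ∈ Finset.range (N + 1),
        1 / ((A + p)^2 * (A + q)^2 * (A + p + q)) := by
      set g : ℕ → ℕ → ℝ := fun p q =>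
        2 * (1 / ((A + p)^2 * (A + q) * (A + p + q)))
          - 1 / ((A + p)^2 * (A + q)^2)
          - A * (1 / ((A + p)^2 * (A + q)^2 * (A + p + q))) with hg
      have hzero : ∑ p ∈ Finset.range (N + 1), ∑ q ∈ Finset.range (N + 1), g p q = 0 := by
        have hswap : ∑ p ∈ Finset.range (N + 1), ∑ q ∈ Finset.range (N + 1), g p q
            = ∑ p ∈ Finset.range (N + 1), ∑ q ∈ Finset.range (N + 1), g q p :=
          Finset.sum_comm
        have h2 : (2 : ℝ) * ∑ p ∈ Finset.range (N + 1), ∑ q ∈ Finset.range (N + 1), g p q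
            = ∑ p ∈ Finset.range (N + 1), ∑ q ∈ Finset.range (N + 1), (g p q + g q p) := by
          rw [two_mul]
          nth_rewrite 2 [hswap]
          rw [← Finset.sum_add_distrib]
          exact Finset.sum_congr rfl fun p _ => (Finset.sum_add_distrib).symm
        have hterm : ∀ p ∈ Finset.range (N + 1), ∀ q ∈ Finset.range (N + 1),
            g p q + g q p = 0 := by
          intro p _ q _
          have hp := (hpos p).ne'
          have hq := (hpos q).ne'
          have hpq : (A + p + q : ℝ) ≠ 0 := by positivity
          have hqp : (A + q + p : ℝ) ≠ 0 := by positivity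
          simp only [hg]
          field_simp
          ring
        have : ∑ p ∈ Finset.range (N + 1), ∑ q ∈ Finset.range (N + 1), (g p q + g q p) = 0 :=
          Finset.sum_eq_zero fun p hp => Finset.sum_eq_zero fun q hq => hterm p hp q hq
        linarith [h2, this]
      have hexp : ∑ p ∈ Finset.range (N + 1), ∑ q ∈ Finset.range (N + 1), g p q
          = 2 * T2 - T1 - A * ∑ p ∈ Finset.range (N + 1), ∑ q ∈ Finset.range (N + 1),
            1 / ((A + p)^2 * (A + q)^2 * (A + p + q)) := by
        simp only [hg, Finset.sum_sub_distrib, ← Finset.mul_sum]; rfl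
      linarith [hexp ▸ hzero]
    show (1 / 8) * (T1 + 2 * (T2 + T3 + T4)) - 2 * ((1 / 16) * (T1 + T2 + 2 * (T3 + T4)))
        - ((1 / 4) * S1)^2 = _
    have hsq : ((1 / 4 : ℝ) * S1)^2 = (1 / 16) * T1 := by rw [hT1]; ring
    linarith [key, hsq]
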